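/- Every 2×2 complex matrix ρ is reconstructed from its qubit tomogram via the quantizer: ρ = Σ_{m ∈ {−1/2,1/2}} (1/(4π)) ∫₀^{2π} ∫₀^{π} D(m,α,β) · Tr(ρ · U(m,α,β)) · sin β dβ dα, where the integral of a matrix-valued function is taken entrywise. -/

import Mathlib

open Matrix Real MeasureTheory intervalIntegral

noncomputable def sigmaX : Matrix (Fin 2) (Fin 2) ℂ := !![0, 1; 1, 0]
noncomputable def sigmaY : Matrix (Fin 2) (Fin 2) ℂ := !![0, -Complex.I; Complex.I, 0]
noncomputable def sigmaZ : Matrix (Fin 2) (Fin 2) ℂ := !![1, 0; 0, -1]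

/-- The qubit de-quantizer U(m, α, β). -/
noncomputable def dequantizer (m α β : ℝ) : Matrix (Fin 2) (Fin 2) ℂ :=
  (1/2 : ℂ) • (1 : Matrix (Fin 2) (Fin 2) ℂ)
    - ((m * Real.cos α * Real.sin β : ℝ) : ℂ) • sigmaX
    - ((m * Real.sin α * Real.sin β : ℝ) : ℂ) • sigmaY
    + ((m * Real.cos β : ℝ) : ℂ) • sigmaZ

/-- The qubit tomogram of a 2×2 complex matrix ρ. -/
noncomputable def tomogram (ρ : Matrix (Fin 2) (Fin 2) ℂ) (m α β : ℝ) : ℂ :=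
  (ρ * dequantizer m α β).trace

/-- The qubit quantizer D(m, α, β) = 3 U(m, α, β) − I. -/
noncomputable def quantizer (m α β : ℝ) : Matrix (Fin 2) (Fin 2) ℂ :=
  (3 : ℂ) • dequantizer m α β - (1 : Matrix (Fin 2) (Fin 2) ℂ)

lemma binteg (c1 c2 c3 c4 c5 : ℂ) :
    (∫ β in (0:ℝ)..Real.pi,
      (c1 * ((Real.sin β : ℝ) : ℂ) + c2 * ((Real.sin β * Real.cos β : ℝ) : ℂ)
        + c3 * ((Real.sin β * Real.cos β ^ 2 : ℝ) : ℂ)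
        + c4 * ((Real.sin β ^ 3 : ℝ) : ℂ)
        + c5 * ((Real.sin β ^ 2 * Real.cos β : ℝ) : ℂ)))
    = 2 * c1 + 2/3 * c3 + 4/3 * c4 := by
  have i1 : IntervalIntegrable (fun β : ℝ => c1 * ((Real.sin β : ℝ) : ℂ)) volume 0 Real.pi :=
    by apply Continuous.intervalIntegrable; fun_prop
  have i2 : IntervalIntegrable (fun β : ℝ => c2 * ((Real.sin β * Real.cos β : ℝ) : ℂ)) volume 0 Real.pi :=
    by apply Continuous.intervalIntegrable; fun_prop
  have i3 : IntervalIntegrable (fun β : ℝ => c3 * ((Real.sin β * Real.cos β ^ 2 : ℝ) : ℂ)) volume 0 Real.pi :=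
    by apply Continuous.intervalIntegrable; fun_prop
  have i4 : IntervalIntegrable (fun β : ℝ => c4 * ((Real.sin β ^ 3 : ℝ) : ℂ)) volume 0 Real.pi :=
    by apply Continuous.intervalIntegrable; fun_prop
  have i5 : IntervalIntegrable (fun β : ℝ => c5 * ((Real.sin β ^ 2 * Real.cos β : ℝ) : ℂ)) volume 0 Real.pi :=
    by apply Continuous.intervalIntegrable; fun_prop
  rw [integral_add (((i1.add i2).add i3).add i4) i5,
      integral_add ((i1.add i2).add i3) i4,
      integral_add (i1.add i2) i3,
      integral_add i1 i2,
      intervalIntegral.integral_const_mul, intervalIntegral.integral_const_mul, intervalIntegral.integral_const_mul, intervalIntegral.integral_const_mul,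
      intervalIntegral.integral_const_mul,
      intervalIntegral.integral_ofReal, intervalIntegral.integral_ofReal, intervalIntegral.integral_ofReal, intervalIntegral.integral_ofReal, intervalIntegral.integral_ofReal,
      integral_sin, integral_sin_mul_cos₁, integral_sin_mul_cos_sq, integral_sin_pow_three,
      integral_sin_sq_mul_cos]
  simp only [Real.cos_pi, Real.sin_pi, Real.cos_zero, Real.sin_zero]
  push_cast
  ring_nf
  try simp only [Complex.I_sq]
  try ring_nf
  try norm_num

lemma ainteg (d1 d2 d3 d4 d5 d6 : ℂ) :
    (∫ α in (0:ℝ)..(2 * Real.pi),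
      (d1 + d2 * ((Real.cos α : ℝ) : ℂ) + d3 * ((Real.sin α : ℝ) : ℂ)
        + d4 * ((Real.cos α ^ 2 : ℝ) : ℂ) + d5 * ((Real.sin α ^ 2 : ℝ) : ℂ)
        + d6 * ((Real.sin α * Real.cos α : ℝ) : ℂ)))
    = 2 * Real.pi * d1 + Real.pi * d4 + Real.pi * d5 := by
  have i1 : IntervalIntegrable (fun _ : ℝ => d1) volume 0 (2 * Real.pi) :=
    intervalIntegrable_const
  have i2 : IntervalIntegrable (fun α : ℝ => d2 * ((Real.cos α : ℝ) : ℂ)) volume 0 (2 * Real.pi) :=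
    by apply Continuous.intervalIntegrable; fun_prop
  have i3 : IntervalIntegrable (fun α : ℝ => d3 * ((Real.sin α : ℝ) : ℂ)) volume 0 (2 * Real.pi) :=
    by apply Continuous.intervalIntegrable; fun_prop
  have i4 : IntervalIntegrable (fun α : ℝ => d4 * ((Real.cos α ^ 2 : ℝ) : ℂ)) volume 0 (2 * Real.pi) :=
    by apply Continuous.intervalIntegrable; fun_prop
  have i5 : IntervalIntegrable (fun α : ℝ => d5 * ((Real.sin α ^ 2 : ℝ) : ℂ)) volume 0 (2 * Real.pi) :=
    by apply Continuous.intervalIntegrable; fun_prop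
  have i6 : IntervalIntegrable (fun α : ℝ => d6 * ((Real.sin α * Real.cos α : ℝ) : ℂ)) volume 0 (2 * Real.pi) :=
    by apply Continuous.intervalIntegrable; fun_prop
  rw [integral_add ((((i1.add i2).add i3).add i4).add i5) i6,
      integral_add (((i1.add i2).add i3).add i4) i5,
      integral_add ((i1.add i2).add i3) i4,
      integral_add (i1.add i2) i3,
      integral_add i1 i2,
      intervalIntegral.integral_const,
      intervalIntegral.integral_const_mul, intervalIntegral.integral_const_mul, intervalIntegral.integral_const_mul, intervalIntegral.integral_const_mul,
      intervalIntegral.integral_const_mul,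
      intervalIntegral.integral_ofReal, intervalIntegral.integral_ofReal, intervalIntegral.integral_ofReal, intervalIntegral.integral_ofReal, intervalIntegral.integral_ofReal,
      integral_cos, integral_sin, integral_cos_sq, integral_sin_sq, integral_sin_mul_cos₁]
  simp only [Real.cos_two_pi, Real.sin_two_pi, Real.cos_zero, Real.sin_zero, sub_zero]
  push_cast
  rw [Complex.real_smul]
  push_cast
  ring_nf
  try simp only [Complex.I_sq]
  try ring_nf
  try norm_num

theorem state_reconstruction (ρ : Matrix (Fin 2) (Fin 2) ℂ) :
    ∀ i j : Fin 2,
      ρ i j =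
      (1 / (4 * (Real.pi : ℂ))) *
        ∫ α in (0:ℝ)..(2 * Real.pi), ∫ β in (0:ℝ)..Real.pi,
          (quantizer (1/2) α β i j * (ρ * dequantizer (1/2) α β).trace
            + quantizer (-(1/2)) α β i j * (ρ * dequantizer (-(1/2)) α β).trace)
          * (Real.sin β : ℂ) := by
  have hπ : (Real.pi : ℂ) ≠ 0 := by
    exact_mod_cast Real.pi_ne_zero
  intro i j
  fin_cases i <;> fin_cases j
  · -- (0,0)
    rw [intervalIntegral.integral_congr
        (g := fun α : ℝ => (2 * ρ 0 0 : ℂ) + 0 * ((Real.cos α : ℝ) : ℂ) + 0 * ((Real.sin α : ℝ) : ℂ)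
          + 0 * ((Real.cos α ^ 2 : ℝ) : ℂ) + 0 * ((Real.sin α ^ 2 : ℝ) : ℂ)
          + 0 * ((Real.sin α * Real.cos α : ℝ) : ℂ))
        (fun α _ => by
          rw [intervalIntegral.integral_congr
            (g := fun β : ℝ => ((ρ 0 0 + ρ 1 1)/2) * ((Real.sin β : ℝ) : ℂ)
              + 0 * ((Real.sin β * Real.cos β : ℝ) : ℂ)
              + ((3/2) * (ρ 0 0 - ρ 1 1)) * ((Real.sin β * Real.cos β ^ 2 : ℝ) : ℂ)
              + 0 * ((Real.sin β ^ 3 : ℝ) : ℂ)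
              + (-(3/2) * (ρ 0 1 * (↑(Real.cos α) + Complex.I * ↑(Real.sin α))
                  + ρ 1 0 * (↑(Real.cos α) - Complex.I * ↑(Real.sin α))))
                * ((Real.sin β ^ 2 * Real.cos β : ℝ) : ℂ))
            (fun β _ => by
              simp [quantizer, dequantizer, sigmaX, sigmaY, sigmaZ, Matrix.trace_fin_two,
                Matrix.mul_apply, Fin.sum_univ_two, Matrix.one_fin_two]
              push_cast
              ring_nf
              try simp only [Complex.I_sq]
              try ring_nf
              try norm_num),
            binteg]
          push_cast
          ring_nf
          try simp only [Complex.I_sq]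
          try ring_nf
          try norm_num),
        ainteg]
    field_simp
    ring_nf
    rfl
  · -- (0,1)
    rw [intervalIntegral.integral_congr
        (g := fun α : ℝ => (0 : ℂ) + 0 * ((Real.cos α : ℝ) : ℂ) + 0 * ((Real.sin α : ℝ) : ℂ)
          + (2 * ρ 0 1 + 2 * ρ 1 0) * ((Real.cos α ^ 2 : ℝ) : ℂ)
          + (2 * ρ 0 1 - 2 * ρ 1 0) * ((Real.sin α ^ 2 : ℝ) : ℂ)
          + (-(4 * Complex.I * ρ 1 0)) * ((Real.sin α * Real.cos α : ℝ) : ℂ))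
        (fun α _ => by
          rw [intervalIntegral.integral_congr
            (g := fun β : ℝ => (0:ℂ) * ((Real.sin β : ℝ) : ℂ)
              + 0 * ((Real.sin β * Real.cos β : ℝ) : ℂ)
              + 0 * ((Real.sin β * Real.cos β ^ 2 : ℝ) : ℂ)
              + ((3/2) * (ρ 0 1 * (↑(Real.cos α) - Complex.I * ↑(Real.sin α))
                    * (↑(Real.cos α) + Complex.I * ↑(Real.sin α))
                  + ρ 1 0 * (↑(Real.cos α) - Complex.I * ↑(Real.sin α))
                    * (↑(Real.cos α) - Complex.I * ↑(Real.sin α))))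
                * ((Real.sin β ^ 3 : ℝ) : ℂ)
              + (-(3/2) * (ρ 0 0 - ρ 1 1) * (↑(Real.cos α) - Complex.I * ↑(Real.sin α)))
                * ((Real.sin β ^ 2 * Real.cos β : ℝ) : ℂ))
            (fun β _ => by
              simp [quantizer, dequantizer, sigmaX, sigmaY, sigmaZ, Matrix.trace_fin_two,
                Matrix.mul_apply, Fin.sum_univ_two, Matrix.one_fin_two]
              push_cast
              ring_nf
              try simp only [Complex.I_sq]
              try ring_nf
              try norm_num),
            binteg]
          push_cast
          ring_nf
          try simp only [Complex.I_sq]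
          try ring_nf
          try norm_num),
        ainteg]
    field_simp
    ring_nf
    rfl
  · -- (1,0)
    rw [intervalIntegral.integral_congr
        (g := fun α : ℝ => (0 : ℂ) + 0 * ((Real.cos α : ℝ) : ℂ) + 0 * ((Real.sin α : ℝ) : ℂ)
          + (2 * ρ 0 1 + 2 * ρ 1 0) * ((Real.cos α ^ 2 : ℝ) : ℂ)
          + (2 * ρ 1 0 - 2 * ρ 0 1) * ((Real.sin α ^ 2 : ℝ) : ℂ)
          + (4 * Complex.I * ρ 0 1) * ((Real.sin α * Real.cos α : ℝ) : ℂ))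
        (fun α _ => by
          rw [intervalIntegral.integral_congr
            (g := fun β : ℝ => (0:ℂ) * ((Real.sin β : ℝ) : ℂ)
              + 0 * ((Real.sin β * Real.cos β : ℝ) : ℂ)
              + 0 * ((Real.sin β * Real.cos β ^ 2 : ℝ) : ℂ)
              + ((3/2) * (ρ 0 1 * (↑(Real.cos α) + Complex.I * ↑(Real.sin α))
                    * (↑(Real.cos α) + Complex.I * ↑(Real.sin α))
                  + ρ 1 0 * (↑(Real.cos α) + Complex.I * ↑(Real.sin α))
                    * (↑(Real.cos α) - Complex.I * ↑(Real.sin α))))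
                * ((Real.sin β ^ 3 : ℝ) : ℂ)
              + (-(3/2) * (ρ 0 0 - ρ 1 1) * (↑(Real.cos α) + Complex.I * ↑(Real.sin α)))
                * ((Real.sin β ^ 2 * Real.cos β : ℝ) : ℂ))
            (fun β _ => by
              simp [quantizer, dequantizer, sigmaX, sigmaY, sigmaZ, Matrix.trace_fin_two,
                Matrix.mul_apply, Fin.sum_univ_two, Matrix.one_fin_two]
              push_cast
              ring_nf
              try simp only [Complex.I_sq]
              try ring_nf
              try norm_num),
            binteg]
          push_cast
          ring_nf
          try simp only [Complex.I_sq]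
          try ring_nf
          try norm_num),
        ainteg]
    field_simp
    ring_nf
    rfl
  · -- (1,1)
    rw [intervalIntegral.integral_congr
        (g := fun α : ℝ => (2 * ρ 1 1 : ℂ) + 0 * ((Real.cos α : ℝ) : ℂ) + 0 * ((Real.sin α : ℝ) : ℂ)
          + 0 * ((Real.cos α ^ 2 : ℝ) : ℂ) + 0 * ((Real.sin α ^ 2 : ℝ) : ℂ)
          + 0 * ((Real.sin α * Real.cos α : ℝ) : ℂ))
        (fun α _ => by
          rw [intervalIntegral.integral_congr
            (g := fun β : ℝ => ((ρ 0 0 + ρ 1 1)/2) * ((Real.sin β : ℝ) : ℂ)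
              + 0 * ((Real.sin β * Real.cos β : ℝ) : ℂ)
              + (-(3/2) * (ρ 0 0 - ρ 1 1)) * ((Real.sin β * Real.cos β ^ 2 : ℝ) : ℂ)
              + 0 * ((Real.sin β ^ 3 : ℝ) : ℂ)
              + ((3/2) * (ρ 0 1 * (↑(Real.cos α) + Complex.I * ↑(Real.sin α))
                  + ρ 1 0 * (↑(Real.cos α) - Complex.I * ↑(Real.sin α))))
                * ((Real.sin β ^ 2 * Real.cos β : ℝ) : ℂ))
            (fun β _ => by
              simp [quantizer, dequantizer, sigmaX, sigmaY, sigmaZ, Matrix.trace_fin_two,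
                Matrix.mul_apply, Fin.sum_univ_two, Matrix.one_fin_two]
              push_cast
              ring_nf
              try simp only [Complex.I_sq]
              try ring_nf
              try norm_num),
            binteg]
          push_cast
          ring_nf
          try simp only [Complex.I_sq]
          try ring_nf
          try norm_num),
        ainteg]
    field_simp
    ring_nf
    rfl
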